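/- Let T be a triangulated category and V a subcategory such that (^⊥V, V) is a torsion pair in T. If G is an object of T with G[-1] ∈ ^⊥V, then every morphism f: G → C with C ∈ V factors through an object R with R ∈ V and R[-1] ∈ ^⊥V (that is, f factors through the subcategory V ∩ (^⊥V)[1]). -/

import Mathlib

open CategoryTheory Category Limits Pretriangulated

universe v u

variable {T : Type u} [Category.{v} T] [HasZeroObject T] [HasShift T ℤ]
  [Preadditive T] [∀ n : ℤ, (CategoryTheory.shiftFunctor T n).Additive] [Pretriangulated T]

namespace VerdierPaper

/-- A morphism factors through the subcategory `X`. -/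
def FactorsThru (X : Set T) {A B : T} (f : A ⟶ B) : Prop :=
  ∃ (X₀ : T) (_ : X₀ ∈ X) (g : A ⟶ X₀) (h : X₀ ⟶ B), f = g ≫ h

/-- A triangulated subcategory: closed under isomorphisms, shifts in both directions,
contains a zero object, and two-out-of-three for distinguished triangles. -/
structure IsTriangulatedSub (N : Set T) : Prop where
  zero : ∃ Z ∈ N, IsZero Z
  closedIso : ∀ {A B : T}, (A ≅ B) → A ∈ N → B ∈ N
  shift : ∀ A ∈ N, (A⟦(1 : ℤ)⟧) ∈ N
  unshift : ∀ A ∈ N, (A⟦(-1 : ℤ)⟧) ∈ N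
  two_of_three₁₂ : ∀ Tr ∈ (distTriang T), Tr.obj₁ ∈ N → Tr.obj₂ ∈ N → Tr.obj₃ ∈ N
  two_of_three₂₃ : ∀ Tr ∈ (distTriang T), Tr.obj₂ ∈ N → Tr.obj₃ ∈ N → Tr.obj₁ ∈ N
  two_of_three₁₃ : ∀ Tr ∈ (distTriang T), Tr.obj₁ ∈ N → Tr.obj₃ ∈ N → Tr.obj₂ ∈ N

/-- Closed under direct summands (retracts). -/
def ClosedUnderSummands (S : Set T) : Prop :=
  ∀ (X₀ A : T), X₀ ∈ S → ∀ (i : A ⟶ X₀) (r : X₀ ⟶ A), i ≫ r = 𝟙 A → A ∈ S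

/-- `f : A ⟶ B` is `X`-monic: every morphism from `A` to an object of `X` extends along `f`. -/
def XMonic (X : Set T) {A B : T} (f : A ⟶ B) : Prop :=
  ∀ X₀ ∈ X, ∀ g : A ⟶ X₀, ∃ h : B ⟶ X₀, f ≫ h = g

/-- `f : A ⟶ B` is `X`-epic: every morphism from an object of `X` to `B` lifts along `f`. -/
def XEpic (X : Set T) {A B : T} (f : A ⟶ B) : Prop :=
  ∀ X₀ ∈ X, ∀ g : X₀ ⟶ B, ∃ h : X₀ ⟶ A, h ≫ f = g

/-- An `X`-preenvelope: an `X`-monic with target in `X`. -/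
def Preenvelope (X : Set T) {A X₀ : T} (f : A ⟶ X₀) : Prop :=
  X₀ ∈ X ∧ XMonic X f

/-- An `X`-precover: an `X`-epic with source in `X`. -/
def Precover (X : Set T) {X₀ B : T} (f : X₀ ⟶ B) : Prop :=
  X₀ ∈ X ∧ XEpic X f

/-- `U^{⊥,X}`: objects such that every morphism from an object of `U` factors through `X`. -/
def perpRightX (U X : Set T) : Set T :=
  {W | ∀ U₀ ∈ U, ∀ f : U₀ ⟶ W, FactorsThru X f}

/-- `^{X,⊥}V`: objects such that every morphism to an object of `V` factors through `X`. -/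
def perpLeftX (X V : Set T) : Set T :=
  {W | ∀ V₀ ∈ V, ∀ f : W ⟶ V₀, FactorsThru X f}

/-- A localization triple `(U, X, V)` of `T`. Triangles `A[-1] → W → Q → A` are
recorded in the rotated form `W → Q → A → W[1]`. -/
structure IsLocalizationTriple (U X V : Set T) : Prop where
  subU : X ⊆ U
  subV : X ⊆ V
  precover : ∀ A : T, ∃ (W Q : T) (w : W ⟶ Q) (r : Q ⟶ A) (d : A ⟶ W⟦(1 : ℤ)⟧),
    Triangle.mk w r d ∈ (distTriang T) ∧ Precover U r ∧ W ∈ perpRightX U X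
  preenvelope : ∀ A : T, ∃ (R W : T) (j : A ⟶ R) (t : R ⟶ W) (d : W ⟶ A⟦(1 : ℤ)⟧),
    Triangle.mk j t d ∈ (distTriang T) ∧ Preenvelope V j ∧ W ∈ perpLeftX X V
  precoverV : ∀ A ∈ V, ∃ (W Q : T) (w : W ⟶ Q) (r : Q ⟶ A) (d : A ⟶ W⟦(1 : ℤ)⟧),
    Triangle.mk w r d ∈ (distTriang T) ∧ Precover U r ∧ W ∈ perpRightX U X ∧
    Q ∈ U ∩ V ∧ W ∈ V ∧ W ∈ perpRightX (U ∩ V) X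
  preenvelopeU : ∀ A ∈ U, ∃ (R W : T) (j : A ⟶ R) (t : R ⟶ W) (d : W ⟶ A⟦(1 : ℤ)⟧),
    Triangle.mk j t d ∈ (distTriang T) ∧ Preenvelope V j ∧ W ∈ perpLeftX X V ∧
    R ∈ U ∩ V ∧ W ∈ U ∧ W ∈ perpLeftX X (U ∩ V)

/-- An `N`-localization triple. -/
structure IsNLocalizationTriple (N U X V : Set T) extends IsLocalizationTriple U X V : Prop where
  xEq : X = U ∩ V ∩ N
  perpR_subset : perpRightX U X ⊆ N
  perpL_subset : perpLeftX X V ⊆ N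

/-- The Verdier condition for an `N`-localization triple. -/
def VerdierCondition (N U X V : Set T) : Prop :=
  ∀ (A B N₀ : T) (s : A ⟶ B) (g : B ⟶ N₀) (h : N₀ ⟶ A⟦(1 : ℤ)⟧),
    Triangle.mk s g h ∈ (distTriang T) → A ∈ U ∩ V → B ∈ U ∩ V → N₀ ∈ N →
    ∃ t : B ⟶ A, FactorsThru X (𝟙 A - s ≫ t) ∧ FactorsThru X (𝟙 B - t ≫ s)


/-- A torsion pair `(Cc, Dd)` in `T`. -/
def TorsionPair (Cc Dd : Set T) : Prop :=
  (∀ C₀ ∈ Cc, ∀ D₀ ∈ Dd, ∀ f : C₀ ⟶ D₀, f = 0) ∧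
  ∀ A : T, ∃ (C₀ D₀ : T) (f : C₀ ⟶ A) (g : A ⟶ D₀) (h : D₀ ⟶ C₀⟦(1 : ℤ)⟧),
    Triangle.mk f g h ∈ (distTriang T) ∧ C₀ ∈ Cc ∧ D₀ ∈ Dd

/-- `U^⊥`. -/
def rightPerp (U : Set T) : Set T := {A | ∀ U₀ ∈ U, ∀ f : U₀ ⟶ A, f = 0}

/-- `^⊥V`. -/
def leftPerp (V : Set T) : Set T := {A | ∀ V₀ ∈ V, ∀ f : A ⟶ V₀, f = 0}

theorem statement_3 (V : Set T) (htp : TorsionPair (leftPerp V) V)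
    (G : T) (hG : (G⟦(-1 : ℤ)⟧) ∈ leftPerp V)
    (C₀ : T) (hC : C₀ ∈ V) (f : G ⟶ C₀) :
    ∃ (R : T) (_ : R ∈ V) (_ : (R⟦(-1 : ℤ)⟧) ∈ leftPerp V)
      (g : G ⟶ R) (h : R ⟶ C₀), f = g ≫ h := by
  obtain ⟨E, R, e, p, d, hTr, hE, hR⟩ := htp.2 G
  -- factor f through R
  obtain ⟨h, hh⟩ := Triangle.yoneda_exact₂ _ hTr f (hE C₀ hC (e ≫ f) ▸ rfl)
  refine ⟨R, hR, ?_, p, h, hh⟩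
  intro V₀ hV₀ φ
  have hTr2 := inv_rot_of_distTriang _ (inv_rot_of_distTriang _ hTr)
  have hm1 : (Triangle.mk e p d).invRotate.invRotate.mor₁ ≫ φ = 0 :=
    hG V₀ hV₀ _
  obtain ⟨ψ, hψ⟩ := Triangle.yoneda_exact₂ _ hTr2 φ hm1
  have : ψ = 0 := hE V₀ hV₀ ψ
  rw [hψ, this, comp_zero]
  rfl

end VerdierPaper
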